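/- Let G be a graph with 2n non-isolated vertices, minimum vertex cover size n, satisfying (∗), and let 𝔭 be a minimal prime of the edge ideal I(G) of height n (equivalently, the complement of {v : v ∈ 𝔭} in V(G) is a maximum independent set of size n). If y_i ∈ 𝔭 and there is a directed path from i to j in the semidirected graph 𝔡_G, then y_j ∈ 𝔭. -/
import Mathlib


open Relation

/-- `C` is a vertex cover of `G`. -/
def IsVC {V : Type*} (G : SimpleGraph V) (C : Set V) : Prop :=
  ∀ ⦃u v : V⦄, G.Adj u v → u ∈ C ∨ v ∈ C

/-- `C` is a minimal vertex cover of `G`. -/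
def IsMinVC {V : Type*} (G : SimpleGraph V) (C : Set V) : Prop :=
  IsVC G C ∧ ∀ D : Set V, IsVC G D → D ⊆ C → D = C

/-- `S` is an independent set of `G`. -/
def IsIndep {V : Type*} (G : SimpleGraph V) (S : Set V) : Prop :=
  ∀ u ∈ S, ∀ v ∈ S, ¬ G.Adj u v

/-- `S` is a maximal independent set of `G`. -/
def IsMaxIndep {V : Type*} (G : SimpleGraph V) (S : Set V) : Prop :=
  IsIndep G S ∧ ∀ T : Set V, IsIndep G T → S ⊆ T → T = S

/-- `G` has no isolated vertices. -/
def NoIsolated {V : Type*} (G : SimpleGraph V) : Prop := ∀ v, ∃ w, G.Adj v w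

/-- The vertex set `{x_1,...,x_n} ∪ {y_1,...,y_n}`: `xv i = Sum.inl i`, `yv i = Sum.inr i`. -/
abbrev Vtx (n : ℕ) := Fin n ⊕ Fin n

def xv {n : ℕ} (i : Fin n) : Vtx n := Sum.inl i
def yv {n : ℕ} (i : Fin n) : Vtx n := Sum.inr i

/-- Condition (∗): X is a minimal vertex cover, Y is a maximal independent set,
and `x_i y_i` is an edge for every `i`. -/
def StarCond {n : ℕ} (G : SimpleGraph (Vtx n)) : Prop :=
  IsMinVC G (Set.range xv) ∧ IsMaxIndep G (Set.range yv) ∧ ∀ i, G.Adj (xv i) (yv i)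

/-- Condition (∗∗): `x_i y_j ∈ E(G)` implies `i ≤ j`. -/
def StarStarCond {n : ℕ} (G : SimpleGraph (Vtx n)) : Prop :=
  ∀ i j : Fin n, G.Adj (xv i) (yv j) → i ≤ j

/-- Condition (i): for distinct `i,j,k` and `z_i ∈ {x_i,y_i}`, if `z_i x_j` and `y_j x_k`
are edges then so is `z_i x_k`. -/
def CondI {n : ℕ} (G : SimpleGraph (Vtx n)) : Prop :=
  ∀ i j k : Fin n, i ≠ j → j ≠ k → i ≠ k →
    ∀ z ∈ ({xv i, yv i} : Set (Vtx n)),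
      G.Adj z (xv j) → G.Adj (yv j) (xv k) → G.Adj z (xv k)

/-- Condition (ii): `x_i y_j ∈ E(G)` implies `x_i x_j ∉ E(G)`. -/
def CondII {n : ℕ} (G : SimpleGraph (Vtx n)) : Prop :=
  ∀ i j : Fin n, G.Adj (xv i) (yv j) → ¬ G.Adj (xv i) (xv j)

/-- The minimum vertex cover size of `G` (the height of the edge ideal) is at least `n`. -/
def HeightN {n : ℕ} (G : SimpleGraph (Vtx n)) : Prop :=
  ∀ C : Finset (Vtx n), IsVC G ↑C → n ≤ C.card

/-- Directed edge `i → j` of the semidirected graph `𝔡_G`. -/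
def dirEdge {n : ℕ} (G : SimpleGraph (Vtx n)) (i j : Fin n) : Prop :=
  i ≠ j ∧ G.Adj (xv i) (yv j)

/-- Undirected edge `ij` of the semidirected graph `𝔡_G`. -/
def undirEdge {n : ℕ} (G : SimpleGraph (Vtx n)) (i j : Fin n) : Prop :=
  G.Adj (xv i) (xv j)

/-- Lemma 4.4. Let `G` satisfy (∗), with `2n` non-isolated vertices and
minimum vertex cover size `n`. If `C` is a vertex cover of size `n` (a minimal prime of
`I(G)` of height `n`) containing `y_i`, and `j ⪰ i` in `𝔡_G`, then `y_j ∈ C`. -/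
theorem cover_closed_under_reachability {n : ℕ} (G : SimpleGraph (Vtx n))
    (hiso : NoIsolated G) (hht : HeightN G) (hstar : StarCond G)
    (C : Finset (Vtx n)) (hC : IsVC G ↑C) (hcard : C.card = n)
    (i j : Fin n) (hyi : yv i ∈ C)
    (hpath : ReflTransGen (dirEdge G) i j) :
    yv j ∈ C := by
  have key : ∀ k : Fin n, ¬ (xv k ∈ C ∧ yv k ∈ C) := by
    intro k ⟨hx, hy⟩
    have hcov : ∀ m : Fin n, xv m ∈ C ∨ yv m ∈ C := fun m => hC (hstar.2.2 m)
    set p : Vtx n → Fin n := Sum.elim id id with hp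
    set f : Fin n → ℕ := fun m => (C.filter (fun v => p v = m)).card with hf
    have hsum : C.card = ∑ m : Fin n, f m :=
      Finset.card_eq_sum_card_fiberwise (fun v _ => Finset.mem_univ (p v))
    have h1 : ∀ m, 1 ≤ f m := by
      intro m
      rcases hcov m with h | h
      · exact Finset.card_pos.mpr ⟨xv m, Finset.mem_filter.mpr ⟨h, rfl⟩⟩
      · exact Finset.card_pos.mpr ⟨yv m, Finset.mem_filter.mpr ⟨h, rfl⟩⟩
    have h2 : 2 ≤ f k := by
      have hsub : ({xv k, yv k} : Finset (Vtx n)) ⊆ C.filter (fun v => p v = k) := by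
        intro v hv
        simp only [Finset.mem_insert, Finset.mem_singleton] at hv
        rcases hv with rfl | rfl <;> exact Finset.mem_filter.mpr ⟨by assumption, rfl⟩
      calc 2 = ({xv k, yv k} : Finset (Vtx n)).card := by simp [xv, yv]
        _ ≤ _ := Finset.card_le_card hsub
    have hsplit : ∑ m ∈ Finset.univ.erase k, f m + f k = ∑ m : Fin n, f m :=
      Finset.sum_erase_add _ _ (Finset.mem_univ k)
    have hge : (Finset.univ.erase k).card ≤ ∑ m ∈ Finset.univ.erase k, f m := by
      calc (Finset.univ.erase k).card = ∑ m ∈ Finset.univ.erase k, 1 := by simp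
        _ ≤ _ := Finset.sum_le_sum (fun m _ => h1 m)
    have hcarderase : (Finset.univ.erase k).card = n - 1 := by
      simp [Finset.card_erase_of_mem]
    have hn : 0 < n := k.pos
    omega
  induction hpath with
  | refl => exact hyi
  | tail _ hstep ih =>
    obtain ⟨_, hadj⟩ := hstep
    rcases hC hadj with hx | hy
    · exact absurd ⟨hx, ih⟩ (key _)
    · exact hy
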